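/- Let ι : G' → G and p : G → G'' be homomorphisms of simplicial groups. For each q define the Moore chain subgroup N_q G = ⋂_{i=1}^{q} ker(d_i : G_q → G_{q-1}) (with N_0 G = G_0), and similarly for G' and G''. Then the sequence 1 → G' → G → G'' → 1 is short exact (i.e., for every q the map ι_q is injective, p_q is surjective, and the image of ι_q equals the kernel of p_q) if and only if the induced sequence of Moore chain groups 1 → N_q G' → N_q G → N_q G'' → 1 is short exact for every q (i.e., the restriction of ι_q to N_q G' is injective, p_q maps N_q G onto N_q G'', and ι_q(N_q G') equals N_q G ∩ ker(p_q)). -/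

import Mathlib

open CategoryTheory

/-- The `q`-th Moore chain subgroup of a simplicial group `G`:
the intersection `⋂_{i=1}^{q} ker(dᵢ : G_q → G_{q-1})`, with `N_0 G = G_0`. -/
def MooreChains (G : SimplicialObject GrpCat) :
    (q : ℕ) → Subgroup (G.obj (Opposite.op (SimplexCategory.mk q)))
  | 0 => ⊤
  | (q + 1) => ⨅ i : Fin (q + 1), MonoidHom.ker (G.δ i.succ).hom

open Opposite Simplicial

namespace MooreAux

lemma congr_app {X Y : GrpCat} {f g : X ⟶ Y} (h : f = g) (x : X) : f x = g x :=
  ConcreteCategory.congr_hom h x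

lemma moore_zero (G : SimplicialObject GrpCat) : MooreChains G 0 = ⊤ := rfl

lemma mem_moore {G : SimplicialObject GrpCat} {m : ℕ} (x : G.obj (op ⦋m+1⦌)) :
    x ∈ MooreChains G (m+1) ↔ ∀ j : Fin (m+1), G.δ j.succ x = 1 := by
  simp [MooreChains, Subgroup.mem_iInf, MonoidHom.mem_ker]

lemma app_δ {X Y : SimplicialObject GrpCat} (f : X ⟶ Y) {n : ℕ} (i : Fin (n+2))
    (x : X.obj (op ⦋n+1⦌)) :
    f.app (op ⦋n⦌) (X.δ i x) = Y.δ i (f.app (op ⦋n+1⦌) x) := by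
  have h := congr_app (SimplicialObject.δ_naturality f i) x
  rw [CategoryTheory.comp_apply, CategoryTheory.comp_apply] at h
  exact h

lemma app_σ {X Y : SimplicialObject GrpCat} (f : X ⟶ Y) {n : ℕ} (i : Fin (n+1))
    (x : X.obj (op ⦋n⦌)) :
    f.app (op ⦋n+1⦌) (X.σ i x) = Y.σ i (f.app (op ⦋n⦌) x) := by
  have h := congr_app (SimplicialObject.σ_naturality f i) x
  rw [CategoryTheory.comp_apply, CategoryTheory.comp_apply] at h
  exact h

lemma kill (X : SimplicialObject GrpCat) {m : ℕ} (k : Fin (m+1)) (w : X.obj (op ⦋m+1⦌))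
    (hw : ∀ j : Fin (m+1), k < j → X.δ j.succ w = 1) :
    ∀ j : Fin (m+1), k ≤ j → X.δ j.succ ((X.σ k (X.δ k.succ w))⁻¹ * w) = 1 := by
  intro j hj
  rcases eq_or_lt_of_le hj with rfl | hlt
  · rw [map_mul, map_inv]
    have h : X.δ k.succ (X.σ k (X.δ k.succ w)) = X.δ k.succ w := by
      have := congr_app (X.δ_comp_σ_succ (i := k)) (X.δ k.succ w)
      simpa using this
    rw [h, inv_mul_cancel]
  · -- here j > k, so m ≥ 1
    have hm : 1 ≤ m := by
      have := j.isLt; have := hlt; omega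
    obtain ⟨m', rfl⟩ : ∃ m', m = m' + 1 := ⟨m - 1, by omega⟩
    rw [map_mul, map_inv, hw j hlt, mul_one]
    -- δ j.succ (σ k h) = σ k' (δ j h), with k = castSucc k'
    have hk' : (k : ℕ) < m' + 1 := by have := hlt; have := j.isLt; omega
    set k' : Fin (m' + 1) := ⟨k, hk'⟩ with hk'def
    have hkc : Fin.castSucc k' = k := by ext; simp [k']
    have h1 : X.δ j.succ (X.σ k (X.δ k.succ w)) = X.σ k' (X.δ j (X.δ k.succ w)) := by
      have hgt : Fin.castSucc k' < j := by rwa [hkc]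
      have := congr_app (X.δ_comp_σ_of_gt (i := j) (j := k') hgt) (X.δ k.succ w)
      rw [hkc] at this
      simpa using this
    rw [h1]
    -- δ j (δ k.succ w) = δ ⟨k+1⟩ (δ j.succ w) = 1
    have hk1 : (k : ℕ) + 1 < m' + 2 := by omega
    set i : Fin (m' + 2) := ⟨k + 1, hk1⟩ with hidef
    have hij : i ≤ j := by
      simp only [Fin.le_iff_val_le_val, hidef]
      exact hlt
    have h2 : X.δ j (X.δ k.succ w) = X.δ i (X.δ j.succ w) := by
      have := congr_app (X.δ_comp_δ (i := i) (j := j) hij) w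
      have hci : Fin.castSucc i = k.succ := by ext; simp [i]
      rw [hci] at this
      simpa using this.symm
    rw [h2, hw j hlt, map_one, map_one, inv_one]

/-- Downward-induction decomposition: any `x` can be written as `c * w` with `c ∈ H`
and `w` in the Moore chain subgroup, provided `H` absorbs the correction terms. -/
lemma decompose (X : SimplicialObject GrpCat) {m : ℕ} (x : X.obj (op ⦋m+1⦌))
    (H : Subgroup (X.obj (op ⦋m+1⦌)))
    (hH : ∀ (k : Fin (m+1)) (c : X.obj (op ⦋m+1⦌)), c ∈ H →
      X.σ k (X.δ k.succ (c⁻¹ * x)) ∈ H) :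
    ∃ c ∈ H, ∀ j : Fin (m+1), X.δ j.succ (c⁻¹ * x) = 1 := by
  have key : ∀ d : ℕ, d ≤ m + 1 → ∃ c ∈ H,
      ∀ j : Fin (m+1), m + 1 - d ≤ (j : ℕ) → X.δ j.succ (c⁻¹ * x) = 1 := by
    intro d
    induction d with
    | zero =>
      intro _
      exact ⟨1, one_mem H, fun j hj => absurd j.isLt (by omega)⟩
    | succ d ih =>
      intro hd
      obtain ⟨c, hc, hfaces⟩ := ih (by omega)
      set k : Fin (m+1) := ⟨m - d, by omega⟩ with hk
      refine ⟨c * X.σ k (X.δ k.succ (c⁻¹ * x)), mul_mem hc (hH k c hc), ?_⟩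
      intro j hj
      have hrw : (c * X.σ k (X.δ k.succ (c⁻¹ * x)))⁻¹ * x
          = (X.σ k (X.δ k.succ (c⁻¹ * x)))⁻¹ * (c⁻¹ * x) := by
        group
      rw [hrw]
      refine kill X k (c⁻¹ * x) ?_ j ?_
      · intro j' hj'
        exact hfaces j' (by simp only [Fin.lt_iff_val_lt_val, hk] at hj' ⊢; omega)
      · simp only [Fin.le_iff_val_le_val, hk]
        omega
  obtain ⟨c, hc, hfaces⟩ := key (m+1) le_rfl
  exact ⟨c, hc, fun j => hfaces j (by omega)⟩

end MooreAux

open MooreAux Opposite Simplicial in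
/-- A sequence `1 → G' → G → G'' → 1` of simplicial groups is short exact (levelwise) if and
only if the induced sequence of Moore chain groups `1 → N_q G' → N_q G → N_q G'' → 1` is short
exact for every `q`. -/
theorem levelwise_exact_iff_mooreChains_exact
    (G' G G'' : SimplicialObject GrpCat) (ι : G' ⟶ G) (p : G ⟶ G'') :
    (∀ q : ℕ,
        Function.Injective (ι.app (Opposite.op (SimplexCategory.mk q))) ∧
        Function.Surjective (p.app (Opposite.op (SimplexCategory.mk q))) ∧
        MonoidHom.range (ι.app (Opposite.op (SimplexCategory.mk q))).hom =
          MonoidHom.ker (p.app (Opposite.op (SimplexCategory.mk q))).hom) ↔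
      (∀ q : ℕ,
        Set.InjOn (ι.app (Opposite.op (SimplexCategory.mk q))) (MooreChains G' q : Set _) ∧
        Subgroup.map (p.app (Opposite.op (SimplexCategory.mk q))).hom (MooreChains G q) =
          MooreChains G'' q ∧
        Subgroup.map (ι.app (Opposite.op (SimplexCategory.mk q))).hom (MooreChains G' q) =
          MooreChains G q ⊓
            MonoidHom.ker (p.app (Opposite.op (SimplexCategory.mk q))).hom) := by
  constructor
  · -- forward direction
    intro h q
    obtain ⟨hinj, hsurj, hex⟩ := h q
    refine ⟨hinj.injOn, ?_, ?_⟩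
    · -- `p` maps `N_q G` onto `N_q G''`
      cases q with
      | zero =>
        rw [moore_zero, moore_zero, ← MonoidHom.range_eq_map, MonoidHom.range_eq_top]
        exact hsurj
      | succ m =>
        apply le_antisymm
        · rintro _ ⟨g, hg, rfl⟩
          rw [mem_moore]
          intro j
          rw [← app_δ p, (mem_moore g).mp hg j, map_one]
        · intro n'' hn''
          obtain ⟨x, hx⟩ := hsurj n''
          have hH : ∀ (k : Fin (m+1)) (c : G.obj (op ⦋m+1⦌)),
              c ∈ MonoidHom.ker (p.app (op ⦋m+1⦌)).hom →
              G.σ k (G.δ k.succ (c⁻¹ * x)) ∈ MonoidHom.ker (p.app (op ⦋m+1⦌)).hom := by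
            intro k c hc
            rw [MonoidHom.mem_ker] at hc ⊢
            rw [app_σ p, app_δ p, map_mul, map_inv, hc, inv_one, one_mul, hx,
              (mem_moore n'').mp hn'' k, map_one]
          obtain ⟨c, hc, hw⟩ := decompose G x (MonoidHom.ker (p.app (op ⦋m+1⦌)).hom) hH
          rw [MonoidHom.mem_ker] at hc
          refine ⟨c⁻¹ * x, (mem_moore _).mpr hw, ?_⟩
          rw [map_mul, map_inv, hc, inv_one, one_mul, hx]
    · -- `ι(N_q G') = N_q G ⊓ ker p`
      cases q with
      | zero =>
        rw [moore_zero, moore_zero, ← MonoidHom.range_eq_map, hex, top_inf_eq]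
      | succ m =>
        apply le_antisymm
        · rintro _ ⟨g', hg', rfl⟩
          refine Subgroup.mem_inf.mpr ⟨?_, ?_⟩
          · rw [mem_moore]
            intro j
            rw [← app_δ ι, (mem_moore g').mp hg' j, map_one]
          · exact hex ▸ MonoidHom.mem_range.mpr ⟨g', rfl⟩
        · rintro g hg
          obtain ⟨hgN, hgK⟩ := Subgroup.mem_inf.mp hg
          obtain ⟨g', rfl⟩ : g ∈ MonoidHom.range (ι.app (op ⦋m+1⦌)).hom := hex ▸ hgK
          refine ⟨g', (mem_moore g').mpr fun j => ?_, rfl⟩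
          apply (h m).1
          rw [map_one, app_δ ι]
          exact (mem_moore _).mp hgN j
  · -- backward direction
    intro h q
    induction q with
    | zero =>
      obtain ⟨hio, hmap, himap⟩ := h 0
      rw [moore_zero, moore_zero, ← MonoidHom.range_eq_map] at hmap
      rw [moore_zero, moore_zero, ← MonoidHom.range_eq_map, top_inf_eq] at himap
      refine ⟨?_, MonoidHom.range_eq_top.mp hmap, himap⟩
      rw [moore_zero, Subgroup.coe_top] at hio
      exact Set.injOn_univ.mp hio
    | succ m ih =>
      obtain ⟨ihinj, ihsurj, ihex⟩ := ih
      obtain ⟨hio, hmap, himap⟩ := h (m+1)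
      -- `p ∘ ι = 1` at level `m+1`
      have hRK : ∀ x : G'.obj (op ⦋m+1⦌),
          p.app (op ⦋m+1⦌) (ι.app (op ⦋m+1⦌) x) = 1 := by
        intro x
        have hH : ∀ (k : Fin (m+1)) (c : G'.obj (op ⦋m+1⦌)),
            c ∈ MonoidHom.ker ((p.app (op ⦋m+1⦌)).hom.comp (ι.app (op ⦋m+1⦌)).hom) →
            G'.σ k (G'.δ k.succ (c⁻¹ * x)) ∈
              MonoidHom.ker ((p.app (op ⦋m+1⦌)).hom.comp (ι.app (op ⦋m+1⦌)).hom) := by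
          intro k c hc
          rw [MonoidHom.mem_ker, MonoidHom.comp_apply, app_σ ι, app_σ p]
          have : ι.app (op ⦋m⦌) (G'.δ k.succ (c⁻¹ * x)) ∈
              MonoidHom.ker (p.app (op ⦋m⦌)).hom :=
            ihex ▸ MonoidHom.mem_range.mpr ⟨_, rfl⟩
          rw [MonoidHom.mem_ker] at this
          rw [this, map_one]
        obtain ⟨c, hc, hw⟩ := decompose G' x
          (MonoidHom.ker ((p.app (op ⦋m+1⦌)).hom.comp (ι.app (op ⦋m+1⦌)).hom)) hH
        · rw [MonoidHom.mem_ker, MonoidHom.comp_apply] at hc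
          have hwm : ι.app (op ⦋m+1⦌) (c⁻¹ * x) ∈
              MonoidHom.ker (p.app (op ⦋m+1⦌)).hom := by
            have : ι.app (op ⦋m+1⦌) (c⁻¹ * x) ∈
                Subgroup.map (ι.app (op ⦋m+1⦌)).hom (MooreChains G' (m+1)) :=
              ⟨c⁻¹ * x, (mem_moore _).mpr hw, rfl⟩
            rw [himap] at this
            exact this.2
          rw [MonoidHom.mem_ker] at hwm
          have hxeq : x = c * (c⁻¹ * x) := by group
          rw [hxeq, map_mul, map_mul, hc, hwm, one_mul]
      refine ⟨?_, ?_, ?_⟩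
      · -- injectivity at level m+1
        intro a b hab
        have hab1 : ι.app (op ⦋m+1⦌) (a * b⁻¹) = 1 := by
          rw [map_mul, map_inv, hab, mul_inv_cancel]
        have hmem : a * b⁻¹ ∈ MooreChains G' (m+1) := by
          rw [mem_moore]
          intro j
          apply ihinj
          rw [map_one, app_δ ι, hab1, map_one]
        have : a * b⁻¹ = 1 := by
          apply hio hmem (one_mem _)
          rw [hab1, map_one]
        rw [← mul_inv_cancel b] at this
        exact mul_right_cancel this
      · -- surjectivity at level m+1
        intro x''
        have hH : ∀ (k : Fin (m+1)) (c : G''.obj (op ⦋m+1⦌)),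
            c ∈ MonoidHom.range (p.app (op ⦋m+1⦌)).hom →
            G''.σ k (G''.δ k.succ (c⁻¹ * x'')) ∈ MonoidHom.range (p.app (op ⦋m+1⦌)).hom := by
          intro k c _
          obtain ⟨y, hy⟩ := ihsurj (G''.δ k.succ (c⁻¹ * x''))
          exact ⟨G.σ k y, by rw [app_σ p, hy]⟩
        obtain ⟨c, hc, hw⟩ := decompose G'' x'' (MonoidHom.range (p.app (op ⦋m+1⦌)).hom) hH
        obtain ⟨a, ha⟩ := hc
        have hwN : c⁻¹ * x'' ∈ MooreChains G'' (m+1) := (mem_moore _).mpr hw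
        rw [← hmap] at hwN
        obtain ⟨b, _, hb⟩ := hwN
        refine ⟨a * b, ?_⟩
        rw [map_mul, ha, hb]
        group
      · -- range = ker at level m+1
        apply le_antisymm
        · rintro _ ⟨g', rfl⟩
          exact MonoidHom.mem_ker.mpr (hRK g')
        · intro x hx
          rw [MonoidHom.mem_ker] at hx
          have hH : ∀ (k : Fin (m+1)) (c : G.obj (op ⦋m+1⦌)),
              c ∈ MonoidHom.range (ι.app (op ⦋m+1⦌)).hom →
              G.σ k (G.δ k.succ (c⁻¹ * x)) ∈ MonoidHom.range (ι.app (op ⦋m+1⦌)).hom := by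
            intro k c hc
            have hpc : p.app (op ⦋m+1⦌) c = 1 := by
              obtain ⟨c', rfl⟩ := hc
              exact hRK c'
            have hpy : p.app (op ⦋m⦌) (G.δ k.succ (c⁻¹ * x)) = 1 := by
              rw [app_δ p, map_mul, map_inv, hpc, hx, inv_one, one_mul, map_one]
            have : G.δ k.succ (c⁻¹ * x) ∈ MonoidHom.range (ι.app (op ⦋m⦌)).hom :=
              ihex ▸ MonoidHom.mem_ker.mpr hpy
            obtain ⟨y', hy'⟩ := this
            exact ⟨G'.σ k y', by rw [app_σ ι, hy']⟩
          obtain ⟨c, hc, hw⟩ := decompose G x (MonoidHom.range (ι.app (op ⦋m+1⦌)).hom) hH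
          · have hpc : p.app (op ⦋m+1⦌) c = 1 := by
              obtain ⟨c', rfl⟩ := hc
              exact hRK c'
            have hwmem : c⁻¹ * x ∈ MooreChains G (m+1) ⊓
                MonoidHom.ker (p.app (op ⦋m+1⦌)).hom := by
              refine Subgroup.mem_inf.mpr ⟨(mem_moore _).mpr hw, ?_⟩
              rw [MonoidHom.mem_ker, map_mul, map_inv, hpc, hx, inv_one, one_mul]
            rw [← himap] at hwmem
            obtain ⟨b, _, hb⟩ := hwmem
            have hxeq : x = c * (c⁻¹ * x) := by group
            rw [hxeq, ← hb]
            exact mul_mem hc (MonoidHom.mem_range.mpr ⟨b, rfl⟩)
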